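/- arXiv:0804.2576 — 7 statements merged into one kernel-verified Lean document; each statement's English description precedes it below -/
import Mathlib

section
/- For any graph G with an edge {u,v}, local complementation satisfies G*u*v*u = G*v*u*v, i.e., the two triple local complementation sequences along the edge {u,v} yield the same graph. -/
/-- Local complementation at a vertex `v`: toggle all edges between
distinct neighbours of `v`. -/
def localComp {V : Type} (G : SimpleGraph V) (v : V) : SimpleGraph V where
  Adj x y := x ≠ y ∧ Xor' (G.Adj x y) (G.Adj v x ∧ G.Adj v y)
  symm := by
    constructor
    intro x y ⟨hxy, h⟩
    refine ⟨hxy.symm, ?_⟩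
    rw [G.adj_comm y x, and_comm]
    exact h
  loopless := ⟨fun x h => h.1 rfl⟩

/-- Edge local complementation on the edge `{u,v}`: `G*u*v*u`. -/
def elc {V : Type} (G : SimpleGraph V) (u v : V) : SimpleGraph V :=
  localComp (localComp (localComp G u) v) u

set_option maxHeartbeats 2000000 in
/-- For any graph `G` with an edge `{u,v}`, the two triple local
complementation sequences along the edge agree: `G*u*v*u = G*v*u*v`. -/
theorem elc_triple_symm {V : Type} (G : SimpleGraph V) (u v : V) (h : G.Adj u v) :
    localComp (localComp (localComp G u) v) u
      = localComp (localComp (localComp G v) u) v := by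
  have huv : u ≠ v := h.ne
  have hvu' : v ≠ u := h.ne.symm
  have hvu : G.Adj v u := h.symm
  have lu : ¬ G.Adj u u := G.loopless.irrefl u
  have lv : ¬ G.Adj v v := G.loopless.irrefl v
  ext x y
  have cux := G.adj_comm u x
  have cuy := G.adj_comm u y
  have cvx := G.adj_comm v x
  have cvy := G.adj_comm v y
  have cxy := G.adj_comm x y
  have lx : ¬ G.Adj x x := G.loopless.irrefl x
  have ly : ¬ G.Adj y y := G.loopless.irrefl y
  simp only [localComp, Xor', ne_eq]
  rcases eq_or_ne u x with rfl | hux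
  · rcases eq_or_ne u y with rfl | huy
    · exact iff_of_false (fun h' => h'.1 rfl) (fun h' => h'.1 rfl)
    · rcases eq_or_ne v y with rfl | hvy
      · clear cux cuy cvx cvy cxy lx ly; simp_all
      · by_cases h1 : G.Adj u y <;> by_cases h2 : G.Adj v y <;> simp_all
  · rcases eq_or_ne v x with rfl | hvx
    · rcases eq_or_ne u y with rfl | huy
      · clear cux cuy cvx cvy cxy lx ly; simp_all
      · rcases eq_or_ne v y with rfl | hvy
        · exact iff_of_false (fun h' => h'.1 rfl) (fun h' => h'.1 rfl)
        · by_cases h1 : G.Adj u y <;> by_cases h2 : G.Adj v y <;> simp_all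
    · rcases eq_or_ne u y with rfl | huy
      · by_cases h1 : G.Adj u x <;> by_cases h2 : G.Adj v x <;> simp_all
      · rcases eq_or_ne v y with rfl | hvy
        · by_cases h1 : G.Adj u x <;> by_cases h2 : G.Adj v x <;> simp_all
        · rcases eq_or_ne x y with rfl | hxy
          · exact iff_of_false (fun h' => h'.1 rfl) (fun h' => h'.1 rfl)
          · by_cases h1 : G.Adj x y <;> by_cases h2 : G.Adj u x <;>
              by_cases h3 : G.Adj u y <;> by_cases h4 : G.Adj v x <;>
              by_cases h5 : G.Adj v y <;> simp_all
end

section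
/- The combinatorial definition of ELC agrees with the algebraic one: for a graph G with edge {u,v}, the graph obtained by toggling all pairs {x,y} where x and y lie in distinct classes among A (neighbours of u only), B (neighbours of v only), C (common neighbours), followed by swapping the labels of u and v, equals G*u*v*u. -/
/-- The "toggle" part of the combinatorial definition of ELC on `{u,v}`:
toggle every pair `{x,y}` of vertices outside `{u,v}` that lie in distinct
classes among `A` (neighbours of `u` only), `B` (neighbours of `v` only)
and `C` (common neighbours). -/
def elcToggle {V : Type} (G : SimpleGraph V) (u v : V) : SimpleGraph V where
  Adj x y := x ≠ y ∧ Xor' (G.Adj x y)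
    (x ≠ u ∧ x ≠ v ∧ y ≠ u ∧ y ≠ v ∧
      (G.Adj u x ∨ G.Adj v x) ∧ (G.Adj u y ∨ G.Adj v y) ∧
      ¬((G.Adj u x ↔ G.Adj u y) ∧ (G.Adj v x ↔ G.Adj v y)))
  symm := by
    constructor
    intro x y ⟨hxy, h⟩
    refine ⟨hxy.symm, ?_⟩
    rw [G.adj_comm y x]
    have hc : (y ≠ u ∧ y ≠ v ∧ x ≠ u ∧ x ≠ v ∧
        (G.Adj u y ∨ G.Adj v y) ∧ (G.Adj u x ∨ G.Adj v x) ∧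
        ¬((G.Adj u y ↔ G.Adj u x) ∧ (G.Adj v y ↔ G.Adj v x))) ↔
        (x ≠ u ∧ x ≠ v ∧ y ≠ u ∧ y ≠ v ∧
        (G.Adj u x ∨ G.Adj v x) ∧ (G.Adj u y ∨ G.Adj v y) ∧
        ¬((G.Adj u x ↔ G.Adj u y) ∧ (G.Adj v x ↔ G.Adj v y))) := by
      constructor <;>
        (rintro ⟨a, b, c, d, e, f, g⟩; exact ⟨c, d, a, b, f, e, fun ⟨p, q⟩ => g ⟨p.symm, q.symm⟩⟩)
    rw [hc]
    exact h
  loopless := ⟨fun x h => h.1 rfl⟩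

lemma map_equiv_adj {V : Type} (G : SimpleGraph V) (e : V ≃ V) (x y : V) :
    (G.map e.toEmbedding).Adj x y ↔ G.Adj (e.symm x) (e.symm y) := by
  simp only [SimpleGraph.map_adj, Equiv.coe_toEmbedding]
  constructor
  · rintro ⟨-, a, b, hab, rfl, rfl⟩; simpa using hab
  · intro hxy; exact ⟨fun e' => hxy.ne (by rw [e']), _, _, hxy, e.apply_symm_apply _, e.apply_symm_apply _⟩

lemma keyGen (p a b c d : Prop) :
    Xor' p ((a ∨ b) ∧ (c ∨ d) ∧ ¬((a ↔ c) ∧ (b ↔ d))) ↔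
    Xor' (Xor' (Xor' p (a ∧ c)) (Xor' b a ∧ Xor' d c))
      (Xor' (Xor' a False) (Xor' True False ∧ Xor' b a) ∧
        Xor' (Xor' c False) (Xor' True False ∧ Xor' d c)) := by
  by_cases hp : p <;> by_cases ha : a <;> by_cases hb : b <;> by_cases hc : c <;>
    by_cases hd : d <;> simp [Xor', *]

/-- The combinatorial definition of ELC agrees with the algebraic one:
toggling pairs in distinct classes among `A`, `B`, `C` and then swapping
the labels of `u` and `v` yields `G*u*v*u`. -/
theorem elcComb_eq_elc {V : Type} [DecidableEq V] (G : SimpleGraph V) (u v : V)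
    (h : G.Adj u v) :
    (elcToggle G u v).map (Equiv.swap u v).toEmbedding = elc G u v := by
  have huv : u ≠ v := h.ne
  ext x y
  rw [map_equiv_adj]
  simp only [Equiv.symm_swap]
  simp only [elc, elcToggle, localComp]
  by_cases hxu : x = u
  · by_cases hyv : y = v
    · rw [hxu, hyv, Equiv.swap_apply_left, Equiv.swap_apply_right]
      simp only [huv, huv.symm, Ne, not_false_iff, true_and, SimpleGraph.irrefl, h, h.symm,
        iff_true, true_iff, and_true, false_and, and_false, not_true, not_false_eq_true]
      simp [Xor']
    · by_cases hyu : y = u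
      · rw [hxu, hyu]; simp [SimpleGraph.irrefl]
      · rw [hxu, Equiv.swap_apply_left, Equiv.swap_apply_of_ne_of_ne hyu hyv]
        have h1 : v ≠ y := fun e => hyv e.symm
        have h2 : u ≠ y := fun e => hyu e.symm
        simp only [h1, h2, hyu, hyv, huv, huv.symm, Ne, not_false_iff, true_and,
          SimpleGraph.irrefl, h, h.symm, iff_true, true_iff, and_true, false_and, and_false,
          not_true, not_false_eq_true]
        by_cases p1 : G.Adj u y <;> by_cases p2 : G.Adj v y <;> simp [Xor', G.adj_comm y u, G.adj_comm y v, *]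
  · by_cases hxv : x = v
    · by_cases hyu : y = u
      · rw [hxv, hyu, Equiv.swap_apply_right, Equiv.swap_apply_left]
        simp only [huv, huv.symm, Ne, not_false_iff, true_and, SimpleGraph.irrefl, h, h.symm,
          iff_true, true_iff, and_true, false_and, and_false, not_true, not_false_eq_true]
        simp [Xor']
      · by_cases hyv : y = v
        · rw [hxv, hyv]; simp [SimpleGraph.irrefl]
        · rw [hxv, Equiv.swap_apply_right, Equiv.swap_apply_of_ne_of_ne hyu hyv]
          have h1 : v ≠ y := fun e => hyv e.symm
          have h2 : u ≠ y := fun e => hyu e.symm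
          simp only [h1, h2, hyu, hyv, huv, huv.symm, Ne, not_false_iff, true_and,
            SimpleGraph.irrefl, h, h.symm, iff_true, true_iff, and_true, false_and, and_false,
            not_true, not_false_eq_true]
          by_cases p1 : G.Adj u y <;> by_cases p2 : G.Adj v y <;> simp [Xor', G.adj_comm y u, G.adj_comm y v, *]
    · by_cases hyu : y = u
      · rw [hyu, Equiv.swap_apply_of_ne_of_ne hxu hxv, Equiv.swap_apply_left]
        have h1 : u ≠ x := fun e => hxu e.symm
        have h2 : v ≠ x := fun e => hxv e.symm
        simp only [h1, h2, hxu, hxv, huv, huv.symm, Ne, not_false_iff, true_and,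
          SimpleGraph.irrefl, h, h.symm, iff_true, true_iff, and_true, false_and, and_false,
          not_true, not_false_eq_true]
        by_cases p1 : G.Adj u x <;> by_cases p2 : G.Adj v x <;> simp [Xor', G.adj_comm x u, G.adj_comm x v, *]
      · by_cases hyv : y = v
        · rw [hyv, Equiv.swap_apply_of_ne_of_ne hxu hxv, Equiv.swap_apply_right]
          have h1 : u ≠ x := fun e => hxu e.symm
          have h2 : v ≠ x := fun e => hxv e.symm
          simp only [h1, h2, hxu, hxv, huv, huv.symm, Ne, not_false_iff, true_and,
            SimpleGraph.irrefl, h, h.symm, iff_true, true_iff, and_true, false_and, and_false,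
            not_true, not_false_eq_true]
          by_cases p1 : G.Adj u x <;> by_cases p2 : G.Adj v x <;> simp [Xor', G.adj_comm x u, G.adj_comm x v, *]
        · by_cases hxy : x = y
          · rw [hxy]; simp [SimpleGraph.irrefl]
          · rw [Equiv.swap_apply_of_ne_of_ne hxu hxv, Equiv.swap_apply_of_ne_of_ne hyu hyv]
            have n1 : ¬u = x := fun e => hxu e.symm
            have n2 : ¬v = x := fun e => hxv e.symm
            have n3 : ¬u = y := fun e => hyu e.symm
            have n4 : ¬v = y := fun e => hyv e.symm
            simp only [n1, n2, n3, n4, hxy, hxu, hxv, hyu, hyv, huv, huv.symm, Ne, not_false_iff, true_and,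
              SimpleGraph.irrefl, h, h.symm, iff_true, true_iff, and_true, false_and, and_false]
            exact keyGen (G.Adj x y) (G.Adj u x) (G.Adj v x) (G.Adj u y) (G.Adj v y)
end

section
/- Bipartiteness is preserved by edge local complementation: if G is a bipartite simple graph with edge {u,v}, then G^{(uv)} = G*u*v*u is also bipartite. -/
set_option maxHeartbeats 2000000 in
theorem elc_preserves_bipartite_aux {V : Type} (G : SimpleGraph V) (u v : V)
    (h : G.Adj u v) (hbip : G.Colorable 2) :
    (elc G u v).Colorable 2 := by
  classical
  obtain ⟨c⟩ := hbip
  have hcuv : c u ≠ c v := c.valid h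
  refine ⟨SimpleGraph.Coloring.mk
    (fun x => if x = u then c v else if x = v then c u else c x) ?_⟩
  intro x y hadj
  have f1 : G.Adj u x → c u ≠ c x := c.valid
  have f2 : G.Adj u y → c u ≠ c y := c.valid
  have f3 : G.Adj v x → c v ≠ c x := c.valid
  have f4 : G.Adj v y → c v ≠ c y := c.valid
  have f5 : G.Adj x y → c x ≠ c y := c.valid
  have g1 : ¬ G.Adj u u := G.loopless.irrefl u
  have g2 : ¬ G.Adj v v := G.loopless.irrefl v
  have huv : u ≠ v := G.ne_of_adj h
  have hvu : G.Adj v u := h.symm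
  simp only [elc, localComp, Xor', ne_eq] at hadj ⊢
  simp only [h, hvu, g1, g2, not_true, not_false_iff, true_and, and_true,
    false_and, and_false, not_false_eq_true, or_false, false_or] at hadj
  obtain ⟨hxy, hadj⟩ := hadj
  by_cases h1 : x = u <;> by_cases h2 : x = v <;> by_cases h3 : y = u <;>
    by_cases h4 : y = v <;>
    by_cases a1 : G.Adj u x <;> by_cases a2 : G.Adj u y <;>
    by_cases a3 : G.Adj v x <;> by_cases a4 : G.Adj v y <;>
    by_cases a5 : G.Adj x y <;> simp_all [SimpleGraph.adj_comm, eq_comm] <;> omega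

/-- Bipartiteness is preserved by edge local complementation: if `G` is
bipartite (2-colorable) and `{u,v}` is an edge, then `G^{(uv)} = G*u*v*u`
is bipartite. -/
theorem elc_preserves_bipartite {V : Type} (G : SimpleGraph V) (u v : V)
    (h : G.Adj u v) (hbip : G.Colorable 2) :
    (elc G u v).Colorable 2 := by
  exact elc_preserves_bipartite_aux G u v h hbip
end

section
/- For any finite simple graph G on n vertices, q(G,2) = 2^n, where q is the interlace polynomial. -/
/-- Deletion of a vertex `u`: the induced subgraph on the other vertices. -/
def delVert {V : Type} (G : SimpleGraph V) (u : V) :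
    SimpleGraph {w : V // w ≠ u} :=
  G.induce {w : V | w ≠ u}

/-- For any graph `G` on `n` vertices, `q(G,2) = 2^n`, where `q` is the
interlace polynomial, i.e. any function on finite graphs satisfying
`q(E_n) = x^n` and `q(G) = q(G\u) + q(G^{(uv)}\u)` for every edge `{u,v}`. -/
theorem interlace_q_eval_two
    (q : ∀ (W : Type) [Fintype W] [DecidableEq W], SimpleGraph W → Polynomial ℤ)
    (hbase : ∀ (W : Type) [Fintype W] [DecidableEq W],
      q W (⊥ : SimpleGraph W) = Polynomial.X ^ (Fintype.card W))
    (hrec : ∀ (W : Type) [Fintype W] [DecidableEq W] (G : SimpleGraph W)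
      (u v : W), G.Adj u v →
      q W G = q {w : W // w ≠ u} (delVert G u) + q {w : W // w ≠ u} (delVert (elc G u v) u))
    {V : Type} [Fintype V] [DecidableEq V] (G : SimpleGraph V) :
    (q V G).eval 2 = 2 ^ (Fintype.card V) := by
  suffices h : ∀ n (W : Type) [Fintype W] [DecidableEq W],
      Fintype.card W = n → ∀ G : SimpleGraph W, (q W G).eval 2 = 2 ^ n by
    exact h _ V rfl G
  intro n
  induction n using Nat.strong_induction_on with
  | _ n ih =>
    intro W _ _ hcard G
    by_cases hedge : ∃ u v, G.Adj u v
    · obtain ⟨u, v, huv⟩ := hedge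
      have hn : 0 < n := by
        rw [← hcard]
        exact Fintype.card_pos_iff.mpr ⟨u⟩
      have hcard' : Fintype.card {w : W // w ≠ u} = n - 1 := by
        have := Fintype.card_subtype_compl (fun w => w = u)
        simp only [Fintype.card_subtype_eq] at this
        simpa [hcard] using this
      rw [hrec W G u v huv]
      rw [Polynomial.eval_add,
        ih (n-1) (Nat.sub_lt hn one_pos) _ hcard' (delVert G u),
        ih (n-1) (Nat.sub_lt hn one_pos) _ hcard' (delVert (elc G u v) u)]
      have : 2 ^ (n-1) + 2 ^ (n-1) = (2:ℤ) ^ ((n-1)+1) := by ring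
      rw [this, Nat.sub_add_cancel hn]
    · push_neg at hedge
      have : G = ⊥ := by
        ext x y
        simp [hedge x y]
      rw [this, hbase W, Polynomial.eval_pow, Polynomial.eval_X, hcard]
end

section
/- The interlace polynomial is multiplicative over disjoint unions: if G is the disjoint union of graphs G1 and G2, then q(G,x) = q(G1,x)·q(G2,x). -/
/-- The disjoint union of two graphs. -/
def disjUnion {V W : Type} (G1 : SimpleGraph V) (G2 : SimpleGraph W) :
    SimpleGraph (V ⊕ W) where
  Adj x y := match x, y with
    | Sum.inl a, Sum.inl b => G1.Adj a b
    | Sum.inr a, Sum.inr b => G2.Adj a b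
    | _, _ => False
  symm := by
    constructor
    rintro (a | a) (b | b) h
    · exact G1.adj_symm h
    · exact h.elim
    · exact h.elim
    · exact G2.adj_symm h
  loopless := by
    constructor
    rintro (a | a) h
    · exact G1.irrefl h
    · exact G2.irrefl h

/- ## Auxiliary material -/

lemma card_ne_aux {α : Type} [Fintype α] [DecidableEq α] (a : α) :
    Fintype.card {b : α // b ≠ a} = Fintype.card α - 1 := by
  have := Fintype.card_subtype_compl (fun b : α => b = a)
  simpa using this

/-- `localComp` commutes with graph isomorphisms. -/
def locIso {V V' : Type} {G : SimpleGraph V} {G' : SimpleGraph V'}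
    (e : G ≃g G') (u : V) : localComp G u ≃g localComp G' (e u) where
  toEquiv := e.toEquiv
  map_rel_iff' := by
    intro x y
    show (localComp G' (e u)).Adj (e x) (e y) ↔ (localComp G u).Adj x y
    simp [localComp, e.map_adj_iff]

/-- `elc` commutes with graph isomorphisms. -/
def elcIso {V V' : Type} {G : SimpleGraph V} {G' : SimpleGraph V'}
    (e : G ≃g G') (u v : V) : elc G u v ≃g elc G' (e u) (e v) :=
  locIso (locIso (locIso e u) v) u

/-- `delVert` commutes with graph isomorphisms. -/
def delVertIso {V V' : Type} {G : SimpleGraph V} {G' : SimpleGraph V'}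
    (e : G ≃g G') (u : V) : delVert G u ≃g delVert G' (e u) where
  toEquiv := e.toEquiv.subtypeEquiv (fun w =>
    not_congr ⟨fun h => by rw [h]; rfl, fun h => e.toEquiv.injective h⟩)
  map_rel_iff' := by
    rintro ⟨a, _⟩ ⟨b, _⟩
    exact e.map_adj_iff

/-- The subtype of a sum omitting a left element. -/
def sumSubtypeEquiv {V W : Type} (u : V) :
    {w : V ⊕ W // w ≠ Sum.inl u} ≃ ({w : V // w ≠ u} ⊕ W) where
  toFun x := match x with
    | ⟨Sum.inl a, h⟩ => Sum.inl ⟨a, fun ha => h (by rw [ha])⟩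
    | ⟨Sum.inr b, _⟩ => Sum.inr b
  invFun x := match x with
    | Sum.inl ⟨a, h⟩ => ⟨Sum.inl a, by simp [h]⟩
    | Sum.inr b => ⟨Sum.inr b, by simp⟩
  left_inv := by rintro ⟨(a | b), h⟩ <;> rfl
  right_inv := by rintro (⟨a, h⟩ | b) <;> rfl

/-- Deleting a left vertex of a disjoint union. -/
def delDisjIso {V W : Type} (G1 : SimpleGraph V) (G2 : SimpleGraph W) (u : V) :
    delVert (disjUnion G1 G2) (Sum.inl u) ≃g disjUnion (delVert G1 u) G2 where
  toEquiv := sumSubtypeEquiv u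
  map_rel_iff' := by
    rintro ⟨(a | b), ha⟩ ⟨(c | d), hc⟩ <;>
      simp [delVert, disjUnion, sumSubtypeEquiv, SimpleGraph.comap] <;> rfl

/-- Swapping a disjoint union. -/
def disjUnionComm {V W : Type} (G1 : SimpleGraph V) (G2 : SimpleGraph W) :
    disjUnion G1 G2 ≃g disjUnion G2 G1 where
  toEquiv := Equiv.sumComm V W
  map_rel_iff' := by rintro (a | a) (b | b) <;> exact Iff.rfl

lemma locComp_disjUnion_inl {V W : Type} (G1 : SimpleGraph V) (G2 : SimpleGraph W) (u : V) :
    localComp (disjUnion G1 G2) (Sum.inl u) = disjUnion (localComp G1 u) G2 := by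
  ext x y
  cases x <;> cases y <;> simp [localComp, disjUnion, Xor']
  exact ⟨fun h => h.2.elim And.left (fun h' => h'.1.elim), fun h => ⟨G2.ne_of_adj h, Or.inl ⟨h, id⟩⟩⟩

lemma elc_disjUnion_inl {V W : Type} (G1 : SimpleGraph V) (G2 : SimpleGraph W) (u v : V) :
    elc (disjUnion G1 G2) (Sum.inl u) (Sum.inl v) = disjUnion (elc G1 u v) G2 := by
  unfold elc
  rw [locComp_disjUnion_inl, locComp_disjUnion_inl, locComp_disjUnion_inl]

/-- The recursion and base case determine `q` up to isomorphism. -/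
lemma q_iso
    (q : ∀ (W : Type) [Fintype W] [DecidableEq W], SimpleGraph W → Polynomial ℤ)
    (hbase : ∀ (W : Type) [Fintype W] [DecidableEq W],
      q W (⊥ : SimpleGraph W) = Polynomial.X ^ (Fintype.card W))
    (hrec : ∀ (W : Type) [Fintype W] [DecidableEq W] (G : SimpleGraph W)
      (u v : W), G.Adj u v →
      q W G = q {w : W // w ≠ u} (delVert G u) + q {w : W // w ≠ u} (delVert (elc G u v) u)) :
    ∀ (n : ℕ) (V V' : Type) [Fintype V] [DecidableEq V] [Fintype V'] [DecidableEq V']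
      (G : SimpleGraph V) (G' : SimpleGraph V'), Fintype.card V = n → (G ≃g G') →
      q V G = q V' G' := by
  intro n
  induction n using Nat.strong_induction_on with
  | _ n IH =>
    intro V V' _ _ _ _ G G' hn e
    by_cases h : ∃ u v, G.Adj u v
    · obtain ⟨u, v, huv⟩ := h
      have huv' : G'.Adj (e u) (e v) := e.map_adj_iff.mpr huv
      rw [hrec V G u v huv, hrec V' G' (e u) (e v) huv']
      have hVpos : 0 < Fintype.card V := Fintype.card_pos_iff.mpr ⟨u⟩
      have hlt : Fintype.card {w : V // w ≠ u} < n := by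
        rw [card_ne_aux]; omega
      have h1 := IH _ hlt _ _ (delVert G u) (delVert G' (e u)) rfl (delVertIso e u)
      have h2 := IH _ hlt _ _ (delVert (elc G u v) u) (delVert (elc G' (e u) (e v)) (e u)) rfl
        ((delVertIso (elcIso e u v) u :
          delVert (elc G u v) u ≃g delVert (elc G' (e u) (e v)) (e u)))
      rw [h1, h2]
    · push_neg at h
      have hG : G = ⊥ := by ext a b; simp [h a b]
      have hG' : G' = ⊥ := by
        ext a b
        simp only [SimpleGraph.bot_adj, iff_false]
        intro had
        exact h (e.symm a) (e.symm b) (by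
          have := e.symm.map_adj_iff.mpr had
          exact this)
      subst hG hG'
      rw [hbase, hbase, Fintype.card_congr e.toEquiv]

/-- The edge-reduction step of the main theorem. -/
lemma key_edge
    (q : ∀ (W : Type) [Fintype W] [DecidableEq W], SimpleGraph W → Polynomial ℤ)
    (hbase : ∀ (W : Type) [Fintype W] [DecidableEq W],
      q W (⊥ : SimpleGraph W) = Polynomial.X ^ (Fintype.card W))
    (hrec : ∀ (W : Type) [Fintype W] [DecidableEq W] (G : SimpleGraph W)
      (u v : W), G.Adj u v →
      q W G = q {w : W // w ≠ u} (delVert G u) + q {w : W // w ≠ u} (delVert (elc G u v) u))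
    (n : ℕ)
    (IH : ∀ m, m < n → ∀ (V W : Type) [Fintype V] [DecidableEq V] [Fintype W] [DecidableEq W]
      (G1 : SimpleGraph V) (G2 : SimpleGraph W), Fintype.card V + Fintype.card W = m →
      q (V ⊕ W) (disjUnion G1 G2) = q V G1 * q W G2)
    (V W : Type) [Fintype V] [DecidableEq V] [Fintype W] [DecidableEq W]
    (G1 : SimpleGraph V) (G2 : SimpleGraph W) (hn : Fintype.card V + Fintype.card W = n)
    (u v : V) (huv : G1.Adj u v) :
    q (V ⊕ W) (disjUnion G1 G2) = q V G1 * q W G2 := by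
  have hD : (disjUnion G1 G2).Adj (Sum.inl u) (Sum.inl v) := huv
  rw [hrec _ (disjUnion G1 G2) _ _ hD, hrec V G1 u v huv]
  have hVpos : 0 < Fintype.card V := Fintype.card_pos_iff.mpr ⟨u⟩
  have hlt : Fintype.card {w : V // w ≠ u} + Fintype.card W < n := by
    rw [card_ne_aux]; omega
  have h1 : q _ (delVert (disjUnion G1 G2) (Sum.inl u)) =
      q {w : V // w ≠ u} (delVert G1 u) * q W G2 := by
    rw [q_iso q hbase hrec _ _ _ _ _ rfl (delDisjIso G1 G2 u)]
    exact IH _ hlt _ _ _ _ rfl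
  have h2 : q _ (delVert (elc (disjUnion G1 G2) (Sum.inl u) (Sum.inl v)) (Sum.inl u)) =
      q {w : V // w ≠ u} (delVert (elc G1 u v) u) * q W G2 := by
    rw [elc_disjUnion_inl, q_iso q hbase hrec _ _ _ _ _ rfl (delDisjIso (elc G1 u v) G2 u)]
    exact IH _ hlt _ _ _ _ rfl
  rw [h1, h2]
  ring

/-- The interlace polynomial is multiplicative over disjoint unions:
`q(G1 ⊔ G2, x) = q(G1,x) · q(G2,x)`. -/
theorem interlace_q_disjUnion
    (q : ∀ (W : Type) [Fintype W] [DecidableEq W], SimpleGraph W → Polynomial ℤ)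
    (hbase : ∀ (W : Type) [Fintype W] [DecidableEq W],
      q W (⊥ : SimpleGraph W) = Polynomial.X ^ (Fintype.card W))
    (hrec : ∀ (W : Type) [Fintype W] [DecidableEq W] (G : SimpleGraph W)
      (u v : W), G.Adj u v →
      q W G = q {w : W // w ≠ u} (delVert G u) + q {w : W // w ≠ u} (delVert (elc G u v) u))
    {V W : Type} [Fintype V] [DecidableEq V] [Fintype W] [DecidableEq W]
    (G1 : SimpleGraph V) (G2 : SimpleGraph W) :
    q (V ⊕ W) (disjUnion G1 G2) = q V G1 * q W G2 := by
  have key : ∀ (n : ℕ) (V W : Type) [Fintype V] [DecidableEq V] [Fintype W] [DecidableEq W]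
      (G1 : SimpleGraph V) (G2 : SimpleGraph W), Fintype.card V + Fintype.card W = n →
      q (V ⊕ W) (disjUnion G1 G2) = q V G1 * q W G2 := by
    intro n
    induction n using Nat.strong_induction_on with
    | _ n IH =>
      intro V W _ _ _ _ G1 G2 hn
      by_cases h1 : ∃ u v, G1.Adj u v
      · obtain ⟨u, v, huv⟩ := h1
        exact key_edge q hbase hrec n IH V W G1 G2 hn u v huv
      · by_cases h2 : ∃ u v, G2.Adj u v
        · obtain ⟨u, v, huv⟩ := h2
          rw [q_iso q hbase hrec (Fintype.card (V ⊕ W)) _ _ _ _ rfl (disjUnionComm G1 G2),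
            key_edge q hbase hrec n IH W V G2 G1 (by omega) u v huv]
          ring
        · push_neg at h1; push_neg at h2
          have hG1 : G1 = ⊥ := by ext a b; simp [h1 a b]
          have hG2 : G2 = ⊥ := by ext a b; simp [h2 a b]
          subst hG1 hG2
          have hbot : disjUnion (⊥ : SimpleGraph V) (⊥ : SimpleGraph W) = ⊥ := by
            ext (a | a) (b | b) <;> simp [disjUnion]
          rw [hbot, hbase, hbase, hbase, Fintype.card_sum, pow_add]
  exact key _ V W G1 G2 rfl
end

section
/- If G' is obtained from G by duplicating a vertex v (adding a new vertex v' adjacent to exactly the neighbours of v, but not to v itself), then q(G',x) = (1+x)·q(G,x) − x·q(G\v,x). -/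
/-- The graph `G` with the vertex `v` duplicated: the new vertex (`none`)
is adjacent to exactly the neighbours of `v`, but not to `v` itself. -/
def dupVertex {V : Type} (G : SimpleGraph V) (v : V) : SimpleGraph (Option V) where
  Adj x y := match x, y with
    | some a, some b => G.Adj a b
    | some a, none => G.Adj v a
    | none, some b => G.Adj v b
    | none, none => False
  symm := by
    constructor
    rintro (_ | a) (_ | b) h
    · exact h.elim
    · exact h
    · exact h
    · exact G.adj_symm h
  loopless := by
    constructor
    rintro (_ | a) h
    · exact h.elim
    · exact G.irrefl h

open Classical in
noncomputable def ind {V : Type} (G : SimpleGraph V) (x y : V) : ZMod 2 :=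
  if G.Adj x y then 1 else 0

lemma ind_self {V : Type} (G : SimpleGraph V) (x : V) : ind G x x = 0 := by
  simp [ind]

lemma ind_symm {V : Type} (G : SimpleGraph V) (x y : V) : ind G x y = ind G y x := by
  unfold ind
  rw [SimpleGraph.adj_comm]

lemma adj_iff_ind {V : Type} (G : SimpleGraph V) {x y : V} (h : x ≠ y) :
    G.Adj x y ↔ ind G x y = 1 := by
  unfold ind
  by_cases hA : G.Adj x y
  · rw [if_pos hA]
    exact iff_of_true hA rfl
  · rw [if_neg hA]
    exact iff_of_false hA (by decide)

lemma ind_eq_one {V : Type} {G : SimpleGraph V} {x y : V} (h : G.Adj x y) :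
    ind G x y = 1 := by unfold ind; exact if_pos h

lemma ind_eq_zero {V : Type} {G : SimpleGraph V} {x y : V} (h : ¬ G.Adj x y) :
    ind G x y = 0 := by unfold ind; exact if_neg h

lemma ind_localComp {V : Type} [DecidableEq V] (G : SimpleGraph V) (v x y : V) :
    ind (localComp G v) x y =
      if x = y then (0 : ZMod 2) else ind G x y + ind G v x * ind G v y := by
  classical
  rcases eq_or_ne x y with rfl | h
  · simp [ind_self]
  · rw [if_neg h]
    by_cases h1 : G.Adj x y <;> by_cases h2 : G.Adj v x <;> by_cases h3 : G.Adj v y <;>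
      by_cases hL : (localComp G v).Adj x y
    all_goals first | rw [ind_eq_one hL] | rw [ind_eq_zero hL]
    all_goals first | rw [ind_eq_one h1] | rw [ind_eq_zero h1]
    all_goals first | rw [ind_eq_one h2] | rw [ind_eq_zero h2]
    all_goals first | rw [ind_eq_one h3] | rw [ind_eq_zero h3]
    all_goals first
      | decide
      | (exfalso; revert hL; simp [localComp, Xor', h, h1, h2, h3])
section Transport

variable {A B : Type} {G : SimpleGraph A} {H : SimpleGraph B}

/-- Build a graph isomorphism from an adjacency-preserving equivalence. -/
def adjIso (e : A ≃ B) (h : ∀ x y, G.Adj x y ↔ H.Adj (e x) (e y)) : G ≃g H :=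
  { toEquiv := e, map_rel_iff' := fun {x y} => (h x y).symm }

lemma lc_transport (e : A ≃ B) (h : ∀ x y, G.Adj x y ↔ H.Adj (e x) (e y)) (a : A) :
    ∀ x y, (localComp G a).Adj x y ↔ (localComp H (e a)).Adj (e x) (e y) := by
  intro x y
  show (x ≠ y ∧ Xor' (G.Adj x y) (G.Adj a x ∧ G.Adj a y)) ↔
    (e x ≠ e y ∧ Xor' (H.Adj (e x) (e y)) (H.Adj (e a) (e x) ∧ H.Adj (e a) (e y)))
  rw [h x y, h a x, h a y]
  exact and_congr (not_congr e.apply_eq_iff_eq.symm) Iff.rfl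

lemma elc_transport (e : A ≃ B) (h : ∀ x y, G.Adj x y ↔ H.Adj (e x) (e y)) (a b : A) :
    ∀ x y, (elc G a b).Adj x y ↔ (elc H (e a) (e b)).Adj (e x) (e y) :=
  lc_transport e (lc_transport e (lc_transport e h a) b) a

/-- The equivalence between subtypes induced by an equivalence. -/
def delEquiv (e : A ≃ B) (a : A) : {x : A // x ≠ a} ≃ {y : B // y ≠ e a} :=
  e.subtypeEquiv (fun x => not_congr e.apply_eq_iff_eq |>.symm)

lemma del_transport (e : A ≃ B) (h : ∀ x y, G.Adj x y ↔ H.Adj (e x) (e y)) (a : A) :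
    ∀ x y, (delVert G a).Adj x y ↔ (delVert H (e a)).Adj (delEquiv e a x) (delEquiv e a y) :=
  fun x y => h x.1 y.1

end Transport
section QLemmas

variable (q : ∀ (W : Type) [Fintype W] [DecidableEq W], SimpleGraph W → Polynomial ℤ)
variable (hbase : ∀ (W : Type) [Fintype W] [DecidableEq W],
      q W (⊥ : SimpleGraph W) = Polynomial.X ^ (Fintype.card W))
variable (hrec : ∀ (W : Type) [Fintype W] [DecidableEq W] (G : SimpleGraph W)
      (u v : W), G.Adj u v →
      q W G = q {w : W // w ≠ u} (delVert G u) + q {w : W // w ≠ u} (delVert (elc G u v) u))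

lemma card_del {A : Type} [Fintype A] [DecidableEq A] (a : A) :
    Fintype.card {x : A // x ≠ a} = Fintype.card A - 1 := by
  have := Set.card_ne_eq a
  simpa using this

include hbase hrec in
lemma q_iso_s14 : ∀ (n : ℕ) (A B : Type) [Fintype A] [DecidableEq A] [Fintype B] [DecidableEq B]
    (G : SimpleGraph A) (H : SimpleGraph B) (e : A ≃ B)
    (h : ∀ x y, G.Adj x y ↔ H.Adj (e x) (e y)), Fintype.card A = n → q A G = q B H := by
  intro n
  induction n using Nat.strong_induction_on with
  | _ n IH =>
    intro A B _ _ _ _ G H e h hn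
    by_cases hE : ∃ p w, G.Adj p w
    · obtain ⟨p, w, hpw⟩ := hE
      have hcard : Fintype.card {x : A // x ≠ p} = n - 1 := by rw [card_del, hn]
      have hlt : n - 1 < n := by
        have : 0 < n := by
          rw [← hn]
          exact Fintype.card_pos_iff.mpr ⟨p⟩
        omega
      rw [hrec A G p w hpw, hrec B H (e p) (e w) ((h p w).mp hpw)]
      congr 1
      · exact IH (n-1) hlt _ _ _ _ (delEquiv e p) (del_transport e h p) hcard
      · exact IH (n-1) hlt _ _ _ _ (delEquiv e p)
          (del_transport e (elc_transport e h p w) p) hcard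
    · have hG : G = ⊥ := by
        ext x y
        simp only [SimpleGraph.bot_adj, iff_false]
        exact fun hh => hE ⟨x, y, hh⟩
      have hH : H = ⊥ := by
        ext x y
        simp only [SimpleGraph.bot_adj, iff_false]
        intro hh
        exact hE ⟨e.symm x, e.symm y, (h _ _).mpr (by simpa using hh)⟩
      rw [hG, hH, hbase, hbase, Fintype.card_congr e]

include hbase hrec in
lemma q_congr {A B : Type} [Fintype A] [DecidableEq A] [Fintype B] [DecidableEq B]
    {G : SimpleGraph A} {H : SimpleGraph B} (e : A ≃ B)
    (h : ∀ x y, G.Adj x y ↔ H.Adj (e x) (e y)) : q A G = q B H :=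
  q_iso_s14 q hbase hrec (Fintype.card A) A B G H e h rfl

end QLemmas
lemma localComp_isolated {V : Type} {G : SimpleGraph V} {w : V}
    (hw : ∀ x, ¬ G.Adj w x) (v : V) : ∀ x, ¬ (localComp G v).Adj w x := by
  rintro x ⟨hne, hx⟩
  rcases hx with ⟨h1, _⟩ | ⟨⟨h1, _⟩, _⟩
  · exact hw x h1
  · exact hw v h1.symm

lemma elc_isolated {V : Type} {G : SimpleGraph V} {w : V}
    (hw : ∀ x, ¬ G.Adj w x) (u v : V) : ∀ x, ¬ (elc G u v).Adj w x :=
  localComp_isolated (localComp_isolated (localComp_isolated hw u) v) u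

lemma delVert_localComp {V : Type} (G : SimpleGraph V) (c w : V) (hc : c ≠ w) :
    delVert (localComp G c) w = localComp (delVert G w) ⟨c, hc⟩ := by
  ext x y
  constructor
  · rintro ⟨h1, h2⟩
    exact ⟨fun hh => h1 (congrArg Subtype.val hh), h2⟩
  · rintro ⟨h1, h2⟩
    exact ⟨fun hh => h1 (Subtype.ext hh), h2⟩

lemma delVert_elc {V : Type} (G : SimpleGraph V) (c d w : V) (hc : c ≠ w) (hd : d ≠ w) :
    delVert (elc G c d) w = elc (delVert G w) ⟨c, hc⟩ ⟨d, hd⟩ := by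
  rw [elc, delVert_localComp _ _ _ hc, delVert_localComp _ _ _ hd,
    delVert_localComp _ _ _ hc]
  rfl

def delCommEquiv {V : Type} (a b : V) (hba : b ≠ a) (hab : a ≠ b) :
    {x : {w : V // w ≠ a} // x ≠ ⟨b, hba⟩} ≃ {x : {w : V // w ≠ b} // x ≠ ⟨a, hab⟩} where
  toFun x := ⟨⟨x.1.1, fun hh => x.2 (Subtype.ext hh)⟩, fun hh => x.1.2 (congrArg Subtype.val hh)⟩
  invFun x := ⟨⟨x.1.1, fun hh => x.2 (Subtype.ext hh)⟩, fun hh => x.1.2 (congrArg Subtype.val hh)⟩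
  left_inv x := rfl
  right_inv x := rfl

lemma delVert_bot {V : Type} (u : V) : delVert (⊥ : SimpleGraph V) u = ⊥ := by
  ext x y
  simp [delVert]

section QLemmas2

variable (q : ∀ (W : Type) [Fintype W] [DecidableEq W], SimpleGraph W → Polynomial ℤ)
variable (hbase : ∀ (W : Type) [Fintype W] [DecidableEq W],
      q W (⊥ : SimpleGraph W) = Polynomial.X ^ (Fintype.card W))
variable (hrec : ∀ (W : Type) [Fintype W] [DecidableEq W] (G : SimpleGraph W)
      (u v : W), G.Adj u v →
      q W G = q {w : W // w ≠ u} (delVert G u) + q {w : W // w ≠ u} (delVert (elc G u v) u))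

include hbase hrec in
lemma q_delComm {V : Type} [Fintype V] [DecidableEq V] (G : SimpleGraph V) (a b : V)
    (hba : b ≠ a) (hab : a ≠ b) :
    q _ (delVert (delVert G a) ⟨b, hba⟩) = q _ (delVert (delVert G b) ⟨a, hab⟩) :=
  q_congr q hbase hrec (delCommEquiv a b hba hab) (fun x y => Iff.rfl)

include hbase hrec in
lemma q_isolated : ∀ (n : ℕ) (V : Type) [Fintype V] [DecidableEq V] (G : SimpleGraph V)
    (w : V), (∀ x, ¬ G.Adj w x) → Fintype.card V = n →
    q V G = Polynomial.X * q _ (delVert G w) := by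
  intro n
  induction n using Nat.strong_induction_on with
  | _ n IH =>
    intro V _ _ G w hw hn
    have hpos : 0 < n := by
      rw [← hn]; exact Fintype.card_pos_iff.mpr ⟨w⟩
    by_cases hE : ∃ p z, G.Adj p z
    · obtain ⟨p, z, hpz⟩ := hE
      have hpw : p ≠ w := fun hh => hw z (hh ▸ hpz)
      have hwp : w ≠ p := hpw.symm
      have hzw : z ≠ w := by
        intro hh; subst hh; exact hw p hpz.symm
      have h1 : Fintype.card {x : V // x ≠ p} = n - 1 := by rw [card_del, hn]
      have hlt : n - 1 < n := by omega
      have hw1 : ∀ x, ¬ (delVert G p).Adj ⟨w, hwp⟩ x := fun x hx => hw x.1 hx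
      have hw2 : ∀ x, ¬ (delVert (elc G p z) p).Adj ⟨w, hwp⟩ x :=
        fun x hx => elc_isolated hw p z x.1 hx
      rw [hrec V G p z hpz,
        IH (n-1) hlt _ _ _ hw1 h1, IH (n-1) hlt _ _ _ hw2 h1,
        hrec _ (delVert G w) ⟨p, hpw⟩ ⟨z, hzw⟩ hpz, mul_add,
        q_delComm q hbase hrec G p w hwp hpw,
        ← delVert_elc G p z w hpw hzw,
        q_delComm q hbase hrec (elc G p z) p w hwp hpw]
    · have hG : G = ⊥ := by
        ext x y
        simp only [SimpleGraph.bot_adj, iff_false]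
        exact fun hh => hE ⟨x, y, hh⟩
      subst hG
      rw [delVert_bot, hbase, hbase, card_del, hn]
      conv_lhs => rw [show n = (n-1) + 1 by omega]
      rw [pow_succ']

end QLemmas2
section ElcFacts

variable {V : Type} [DecidableEq V]

lemma elc_pendant_isolated {G : SimpleGraph V} {p v : V}
    (hp : ∀ x, G.Adj p x ↔ x = v) (x : V) (hxp : x ≠ p) :
    ¬ (elc G p v).Adj v x := by
  have hpv : G.Adj p v := (hp v).mpr rfl
  have hvp : v ≠ p := fun hh => G.loopless.irrefl p (hh ▸ hpv)
  have hpv' : p ≠ v := hvp.symm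
  rcases eq_or_ne v x with rfl | hvx
  · exact (elc G p v).loopless.irrefl v
  intro hA
  have hxv : x ≠ v := hvx.symm
  have hpx : p ≠ x := hxp.symm
  have this1 := (adj_iff_ind _ hvx).mp hA
  have z1 : ind G p x = 0 := ind_eq_zero (fun h => hvx ((hp x).mp h).symm)
  have z2 : ind G x p = 0 := by rw [ind_symm]; exact z1
  have o1 : ind G p v = 1 := ind_eq_one hpv
  have o2 : ind G v p = 1 := by rw [ind_symm]; exact o1
  have sxv : ind G x v = ind G v x := ind_symm G x v
  rw [elc] at this1
  simp only [ind_localComp, ind_self, if_neg, hvx, hxp, hvp, hpv', hxv, hpx, z1, z2, o1, o2,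
    sxv, if_false, ite_false, ne_eq, not_false_iff] at this1
  revert this1
  generalize ind G v x = a
  revert a
  decide

end ElcFacts

section ElcFacts2

variable {V : Type} [DecidableEq V]

lemma elc_pendant_other {G : SimpleGraph V} {p v : V}
    (hp : ∀ x, G.Adj p x ↔ x = v) (x y : V)
    (hxp : x ≠ p) (hxv : x ≠ v) (hyp : y ≠ p) (hyv : y ≠ v) :
    (elc G p v).Adj x y ↔ G.Adj x y := by
  have hpv : G.Adj p v := (hp v).mpr rfl
  have hvp : v ≠ p := fun hh => G.loopless.irrefl p (hh ▸ hpv)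
  have hpv' : p ≠ v := hvp.symm
  rcases eq_or_ne x y with rfl | hxy
  · exact iff_of_false ((elc G p v).loopless.irrefl x) (G.loopless.irrefl x)
  rw [adj_iff_ind _ hxy, adj_iff_ind _ hxy, elc]
  have z1 : ind G p x = 0 := ind_eq_zero (fun h => hxv ((hp x).mp h))
  have z2 : ind G x p = 0 := by rw [ind_symm]; exact z1
  have z3 : ind G p y = 0 := ind_eq_zero (fun h => hyv ((hp y).mp h))
  have z4 : ind G y p = 0 := by rw [ind_symm]; exact z3
  have o1 : ind G p v = 1 := ind_eq_one hpv
  have o2 : ind G v p = 1 := by rw [ind_symm]; exact o1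
  have s1 : ind G x v = ind G v x := ind_symm G x v
  have s2 : ind G y v = ind G v y := ind_symm G y v
  have s3 : ind G y x = ind G x y := ind_symm G y x
  constructor <;> intro hgoal
  all_goals (
    revert hgoal
    simp only [ind_localComp, ind_self, hxy, hxp, hxv, hyp, hyv, hvp, hpv',
      hxp.symm, hxv.symm, hyp.symm, hyv.symm, hxy.symm,
      z1, z2, z3, z4, o1, o2, s1, s2, s3,
      if_false, ite_false, ne_eq, not_false_iff]
    generalize ind G v x = a
    generalize ind G v y = b
    generalize ind G x y = c
    revert a b c
    decide)

lemma elc_adj_vw {G : SimpleGraph V} {u v : V} (huv : G.Adj u v) (w : V)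
    (hwu : w ≠ u) (hwv : w ≠ v) :
    (elc G u v).Adj v w ↔ G.Adj u w := by
  have huv' : u ≠ v := huv.ne
  have hvu : v ≠ u := huv'.symm
  have hvw : v ≠ w := hwv.symm
  have o1 : ind G u v = 1 := ind_eq_one huv
  have o2 : ind G v u = 1 := by rw [ind_symm]; exact o1
  have huw' : u ≠ w := hwu.symm
  rw [adj_iff_ind _ hvw, adj_iff_ind _ huw', elc]
  have s1 : ind G w u = ind G u w := ind_symm G w u
  have s2 : ind G w v = ind G v w := ind_symm G w v
  constructor <;> intro hgoal
  all_goals (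
    revert hgoal
    simp only [ind_localComp, ind_self, huv', hvu, hvw, hwu, hwv, huw', huw'.symm,
      o1, o2, s1, s2, if_false, ite_false, ne_eq, not_false_iff]
    generalize ind G u w = a
    generalize ind G v w = b
    revert a b
    decide)

end ElcFacts2

section ElcFacts3

variable {V : Type} [DecidableEq V]

lemma elc_elc_eq {G : SimpleGraph V} {u v w : V} (huv : G.Adj u v) (huw : G.Adj u w)
    (hvw : v ≠ w) (x y : V) (hxu : x ≠ u) (hxv : x ≠ v) (hyu : y ≠ u) (hyv : y ≠ v) :
    (elc (elc G u v) v w).Adj x y ↔ (elc G u w).Adj x y := by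
  have huv' : u ≠ v := huv.ne
  have hvu : v ≠ u := huv'.symm
  have huw' : u ≠ w := huw.ne
  have hwu : w ≠ u := huw'.symm
  have hwv : w ≠ v := hvw.symm
  have o1 : ind G u v = 1 := ind_eq_one huv
  have o2 : ind G v u = 1 := by rw [ind_symm]; exact o1
  have o3 : ind G u w = 1 := ind_eq_one huw
  have o4 : ind G w u = 1 := by rw [ind_symm]; exact o3
  have s1 : ind G w v = ind G v w := ind_symm G w v
  rcases eq_or_ne x y with rfl | hxy
  · exact iff_of_false ((elc (elc G u v) v w).loopless.irrefl x) ((elc G u w).loopless.irrefl x)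
  have hyx : y ≠ x := hxy.symm
  rcases eq_or_ne x w with rfl | hxw
  · -- x = w (w is substituted by x)
    have hyw : y ≠ x := hyx
    have o5 : ind G x u = 1 := by rw [ind_symm]; exact o3
    rw [adj_iff_ind _ hxy, adj_iff_ind _ hxy, elc, elc, elc]
    have s2 : ind G x v = ind G v x := ind_symm G x v
    have s3 : ind G y v = ind G v y := ind_symm G y v
    have s4 : ind G y u = ind G u y := ind_symm G y u
    have s5 : ind G y x = ind G x y := ind_symm G y x
    constructor <;> intro hgoal <;>
    · revert hgoal
      simp only [ind_localComp, ind_self, huv', hvu, huw', hwu, hvw, hwv, hxy, hyx,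
        hyu, hyv, hyu.symm, hyv.symm, hxu, hxv, hxu.symm, hxv.symm,
        o1, o2, o3, o4, o5, s1, s2, s3, s4, s5, if_false, ite_false, ne_eq, not_false_iff]
      generalize ind G v x = a
      generalize ind G u y = b
      generalize ind G v y = c
      generalize ind G x y = d
      revert a b c d
      decide
  rcases eq_or_ne y w with rfl | hyw
  · -- y = w (w is substituted by y)
    have o5 : ind G y u = 1 := by rw [ind_symm]; exact o3
    rw [adj_iff_ind _ hxy, adj_iff_ind _ hxy, elc, elc, elc]
    have s2 : ind G x v = ind G v x := ind_symm G x v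
    have s3 : ind G x u = ind G u x := ind_symm G x u
    have s4 : ind G y x = ind G x y := ind_symm G y x
    have s5 : ind G y v = ind G v y := ind_symm G y v
    constructor <;> intro hgoal <;>
    · revert hgoal
      simp only [ind_localComp, ind_self, huv', hvu, huw', hwu, hvw, hwv, hxy, hyx,
        hxu, hxv, hxw, hxu.symm, hxv.symm, hxw.symm, hyu, hyv, hyu.symm, hyv.symm,
        o1, o2, o3, o4, o5, s1, s2, s3, s4, s5, if_false, ite_false, ne_eq, not_false_iff]
      generalize ind G v y = a
      generalize ind G u x = b
      generalize ind G v x = c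
      generalize ind G x y = d
      revert a b c d
      decide
  · -- generic
    have hwx : w ≠ x := hxw.symm
    have hwy : w ≠ y := hyw.symm
    rw [adj_iff_ind _ hxy, adj_iff_ind _ hxy, elc, elc, elc]
    have s2 : ind G x v = ind G v x := ind_symm G x v
    have s3 : ind G x u = ind G u x := ind_symm G x u
    have s4 : ind G x w = ind G w x := ind_symm G x w
    have s5 : ind G y v = ind G v y := ind_symm G y v
    have s6 : ind G y u = ind G u y := ind_symm G y u
    have s7 : ind G y w = ind G w y := ind_symm G y w
    have s8 : ind G y x = ind G x y := ind_symm G y x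
    constructor <;> intro hgoal <;>
    · revert hgoal
      simp only [ind_localComp, ind_self, huv', hvu, huw', hwu, hvw, hwv, hxy, hyx,
        hxu, hxv, hxw, hxu.symm, hxv.symm, hxw.symm,
        hyu, hyv, hyw, hyu.symm, hyv.symm, hyw.symm,
        o1, o2, o3, o4, s1, s2, s3, s4, s5, s6, s7, s8,
        if_false, ite_false, ne_eq, not_false_iff]
      generalize ind G v w = a
      generalize ind G u x = b
      generalize ind G u y = c
      generalize ind G v x = d
      generalize ind G v y = e
      generalize ind G w x = f
      generalize ind G w y = g
      generalize ind G x y = i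
      revert a b c d e f g i
      decide

end ElcFacts3

section DupFacts

variable {V : Type} [DecidableEq V]

lemma lc_some_mirror {G : SimpleGraph V} {H : SimpleGraph (Option V)}
    (h : ∀ a b, H.Adj (some a) (some b) ↔ G.Adj a b) (c : V) :
    ∀ a b, (localComp H (some c)).Adj (some a) (some b) ↔ (localComp G c).Adj a b := by
  intro a b
  show (some a ≠ some b ∧ Xor' _ _) ↔ (a ≠ b ∧ Xor' _ _)
  rw [h a b, h c a, h c b]
  exact and_congr (by simp) Iff.rfl

lemma elc_some_mirror {G : SimpleGraph V} {H : SimpleGraph (Option V)}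
    (h : ∀ a b, H.Adj (some a) (some b) ↔ G.Adj a b) (c d : V) :
    ∀ a b, (elc H (some c) (some d)).Adj (some a) (some b) ↔ (elc G c d).Adj a b :=
  lc_some_mirror (lc_some_mirror (lc_some_mirror h c) d) c

lemma dup_some_some (G : SimpleGraph V) (v : V) :
    ∀ a b, (dupVertex G v).Adj (some a) (some b) ↔ G.Adj a b := fun _ _ => Iff.rfl

lemma elc_dup_some (G : SimpleGraph V) (v c d : V) :
    ∀ a b, (elc (dupVertex G v) (some c) (some d)).Adj (some a) (some b) ↔
      (elc G c d).Adj a b :=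
  elc_some_mirror (dup_some_some G v) c d

lemma ind_dup_ss (G : SimpleGraph V) (v a b : V) :
    ind (dupVertex G v) (some a) (some b) = ind G a b := rfl

lemma ind_dup_ns (G : SimpleGraph V) (v b : V) :
    ind (dupVertex G v) none (some b) = ind G v b := rfl

lemma ind_dup_sn (G : SimpleGraph V) (v a : V) :
    ind (dupVertex G v) (some a) none = ind G v a := rfl

lemma ind_dup_nn (G : SimpleGraph V) (v : V) :
    ind (dupVertex G v) none none = 0 := ind_eq_zero (fun h => h)

lemma dup_elc_none {G : SimpleGraph V} {u v : V} (huv : G.Adj u v) (x : V) (hxu : x ≠ u) :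
    (elc (dupVertex G v) (some u) (some v)).Adj none (some x) ↔ x = v := by
  have huv' : u ≠ v := huv.ne
  have hvu : v ≠ u := huv'.symm
  have o1 : ind G u v = 1 := ind_eq_one huv
  have o2 : ind G v u = 1 := by rw [ind_symm]; exact o1
  rcases eq_or_ne x v with rfl | hxv
  · refine iff_of_true ?_ rfl
    rw [adj_iff_ind _ (by simp), elc]
    simp only [ind_localComp, ind_self, ind_dup_ss, ind_dup_ns, ind_dup_sn, ind_dup_nn,
      Option.some.injEq, reduceCtorEq, huv', hvu, hxu, o1, o2,
      if_false, ite_false, ne_eq, not_false_iff, if_true, ite_true]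
    decide
  · refine iff_of_false ?_ hxv
    intro hA
    have h1 := (adj_iff_ind (elc (dupVertex G v) (some u) (some v)) (x := none)
      (y := some x) (by simp)).mp hA
    rw [elc] at h1
    revert h1
    have s1 : ind G x u = ind G u x := ind_symm G x u
    have s2 : ind G x v = ind G v x := ind_symm G x v
    simp only [ind_localComp, ind_self, ind_dup_ss, ind_dup_ns, ind_dup_sn, ind_dup_nn,
      Option.some.injEq, reduceCtorEq, huv', hvu, hxu, hxv, hxu.symm, hxv.symm, o1, o2, s1, s2,
      if_false, ite_false, ne_eq, not_false_iff]
    generalize ind G u x = a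
    generalize ind G v x = b
    revert a b
    decide

def optTrimEquiv (u : V) : {x : Option V // x ≠ some u} ≃ Option {w : V // w ≠ u} where
  toFun x := match x with
    | ⟨none, _⟩ => none
    | ⟨some a, h⟩ => some ⟨a, fun hh => h (by rw [hh])⟩
  invFun x := match x with
    | none => ⟨none, fun hh => Option.some_ne_none _ hh.symm⟩
    | some a => ⟨some a.1, fun hh => a.2 (Option.some_injective _ hh)⟩
  left_inv := by rintro ⟨(_ | a), h⟩ <;> rfl
  right_inv := by rintro (_ | ⟨a, h⟩) <;> rfl

def optNoneEquiv : {x : Option V // x ≠ none} ≃ V where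
  toFun x := match x with
    | ⟨some a, _⟩ => a
    | ⟨none, h⟩ => absurd rfl h
  invFun a := ⟨some a, fun hh => Option.some_ne_none _ hh⟩
  left_inv := by
    rintro ⟨(_ | a), h⟩
    · exact absurd rfl h
    · rfl
  right_inv a := rfl

def optTrim2Equiv (u : V) (hn : (none : Option V) ≠ some u) :
    {x : {x : Option V // x ≠ some u} // x ≠ ⟨none, hn⟩} ≃ {w : V // w ≠ u} where
  toFun x := match x with
    | ⟨⟨some a, h⟩, _⟩ => ⟨a, fun hh => h (by rw [hh])⟩
    | ⟨⟨none, _⟩, h2⟩ => absurd (Subtype.ext rfl) h2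
  invFun a := ⟨⟨some a.1, fun hh => a.2 (Option.some_injective _ hh)⟩,
    fun hh => Option.some_ne_none _ (congrArg Subtype.val hh)⟩
  left_inv := by
    rintro ⟨⟨(_ | a), h⟩, h2⟩
    · exact absurd (Subtype.ext rfl) h2
    · rfl
  right_inv a := rfl

def optTrim3Equiv (u v : V) (hn : (none : Option V) ≠ some u) (hsv : (some v : Option V) ≠ some u)
    (hvn : (⟨some v, hsv⟩ : {x : Option V // x ≠ some u}) ≠ ⟨none, hn⟩) (hvu : v ≠ u) :
    {y : {x : {x : Option V // x ≠ some u} // x ≠ ⟨none, hn⟩} // y ≠ ⟨⟨some v, hsv⟩, hvn⟩} ≃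
      {y : {w : V // w ≠ u} // y ≠ ⟨v, hvu⟩} where
  toFun y := match y with
    | ⟨⟨⟨some a, h⟩, _⟩, h3⟩ => ⟨⟨a, fun hh => h (by rw [hh])⟩, by
        intro hh
        apply h3
        apply Subtype.ext
        apply Subtype.ext
        exact congrArg Option.some (congrArg Subtype.val hh)⟩
    | ⟨⟨⟨none, _⟩, h2⟩, _⟩ => absurd (Subtype.ext rfl) h2
  invFun y := ⟨⟨⟨some y.1.1, fun hh => y.1.2 (Option.some_injective _ hh)⟩,
      fun hh => Option.some_ne_none _ (congrArg Subtype.val hh)⟩, by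
    intro hh
    apply y.2
    apply Subtype.ext
    show y.1.1 = v
    exact Option.some_injective _ (congrArg (fun z => z.1.1) hh)⟩
  left_inv := by
    rintro ⟨⟨⟨(_ | a), h⟩, h2⟩, h3⟩
    · exact absurd (Subtype.ext rfl) h2
    · rfl
  right_inv y := rfl

end DupFacts

section Final

variable (q : ∀ (W : Type) [Fintype W] [DecidableEq W], SimpleGraph W → Polynomial ℤ)
variable (hbase : ∀ (W : Type) [Fintype W] [DecidableEq W],
      q W (⊥ : SimpleGraph W) = Polynomial.X ^ (Fintype.card W))
variable (hrec : ∀ (W : Type) [Fintype W] [DecidableEq W] (G : SimpleGraph W)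
      (u v : W), G.Adj u v →
      q W G = q {w : W // w ≠ u} (delVert G u) + q {w : W // w ≠ u} (delVert (elc G u v) u))

include hbase hrec in
lemma q_pendant {V : Type} [Fintype V] [DecidableEq V] (G : SimpleGraph V) (p v : V)
    (hvp : v ≠ p) (hp : ∀ x, G.Adj p x ↔ x = v) :
    q V G = q _ (delVert G p) +
      Polynomial.X * q _ (delVert (delVert G p) ⟨v, hvp⟩) := by
  have hpv : G.Adj p v := (hp v).mpr rfl
  rw [hrec V G p v hpv]
  congr 1
  have hiso : ∀ x, ¬ (delVert (elc G p v) p).Adj ⟨v, hvp⟩ x :=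
    fun x hx => elc_pendant_isolated hp x.1 x.2 hx
  rw [q_isolated q hbase hrec (Fintype.card {w : V // w ≠ p}) _ _ ⟨v, hvp⟩ hiso rfl]
  have heq : delVert (delVert (elc G p v) p) ⟨v, hvp⟩ = delVert (delVert G p) ⟨v, hvp⟩ := by
    ext x y
    exact elc_pendant_other hp _ _ x.1.2 (fun hh => x.2 (Subtype.ext hh))
      y.1.2 (fun hh => y.2 (Subtype.ext hh))
  rw [heq]

include hbase hrec in
lemma q_star {V : Type} [Fintype V] [DecidableEq V] (G : SimpleGraph V) (u v : V)
    (huv : G.Adj u v) (hvu : v ≠ u) (huv' : u ≠ v) :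
    q _ (delVert (delVert (elc G u v) u) ⟨v, hvu⟩) + q _ (delVert G v)
      = q _ (delVert (elc G u v) u) + q _ (delVert (delVert G u) ⟨v, hvu⟩) := by
  by_cases hw : ∃ w, G.Adj u w ∧ w ≠ v
  · obtain ⟨w, huw, hwv⟩ := hw
    have hwu : w ≠ u := huw.ne'
    have hadj1 : (delVert (elc G u v) u).Adj ⟨v, hvu⟩ ⟨w, hwu⟩ :=
      (elc_adj_vw huv w hwu hwv).mpr huw
    have hadj2 : (delVert G v).Adj ⟨u, huv'⟩ ⟨w, hwv⟩ := huw
    rw [hrec _ (delVert (elc G u v) u) ⟨v, hvu⟩ ⟨w, hwu⟩ hadj1,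
      hrec _ (delVert G v) ⟨u, huv'⟩ ⟨w, hwv⟩ hadj2,
      q_delComm q hbase hrec G v u huv' hvu,
      ← delVert_elc (elc G u v) v w u hvu hwu,
      ← delVert_elc G u w v huv' hwv]
    have hgr : delVert (delVert (elc (elc G u v) v w) u) ⟨v, hvu⟩
        = delVert (delVert (elc G u w) u) ⟨v, hvu⟩ := by
      ext x y
      exact elc_elc_eq huv huw (fun hh => hwv (hh.symm)) _ _
        x.1.2 (fun hh => x.2 (Subtype.ext hh)) y.1.2 (fun hh => y.2 (Subtype.ext hh))
    rw [hgr, q_delComm q hbase hrec (elc G u w) u v hvu huv']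
    ring
  · push_neg at hw
    have hp : ∀ x, G.Adj u x ↔ x = v := fun x => ⟨fun hh => hw x hh, fun hh => hh ▸ huv⟩
    have g1 : delVert (delVert (elc G u v) u) ⟨v, hvu⟩ = delVert (delVert G u) ⟨v, hvu⟩ := by
      ext x y
      exact elc_pendant_other hp _ _ x.1.2 (fun hh => x.2 (Subtype.ext hh))
        y.1.2 (fun hh => y.2 (Subtype.ext hh))
    have g2 : ∀ x, ¬ (delVert (elc G u v) u).Adj ⟨v, hvu⟩ x :=
      fun x hx => elc_pendant_isolated hp x.1 x.2 hx
    have g3 : ∀ x, ¬ (delVert G v).Adj ⟨u, huv'⟩ x :=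
      fun x hx => x.2 ((hp x.1).mp hx)
    rw [q_isolated q hbase hrec (Fintype.card {w : V // w ≠ u}) _ _ ⟨v, hvu⟩ g2 rfl,
      q_isolated q hbase hrec (Fintype.card {w : V // w ≠ v}) _ _ ⟨u, huv'⟩ g3 rfl,
      g1, q_delComm q hbase hrec G v u huv' hvu]
    ring

include hbase hrec in
lemma main_aux : ∀ (n : ℕ) (V : Type) [Fintype V] [DecidableEq V] (G : SimpleGraph V)
    (v : V), Fintype.card V = n →
    q (Option V) (dupVertex G v)
      = (1 + Polynomial.X) * q V G - Polynomial.X * q _ (delVert G v) := by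
  intro n
  induction n using Nat.strong_induction_on with
  | _ n IH =>
    intro V _ _ G v hn
    by_cases hdeg : ∃ u, G.Adj u v
    · obtain ⟨u, huv⟩ := hdeg
      have huv' : u ≠ v := huv.ne
      have hvu : v ≠ u := huv'.symm
      have hpos : 0 < n := by rw [← hn]; exact Fintype.card_pos_iff.mpr ⟨v⟩
      have hcard : Fintype.card {w : V // w ≠ u} = n - 1 := by rw [card_del, hn]
      have hlt : n - 1 < n := by omega
      have hdupAdj : (dupVertex G v).Adj (some u) (some v) := huv
      rw [hrec _ (dupVertex G v) (some u) (some v) hdupAdj]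
      -- Term 1: deleting u from the duplicated graph
      have e1 : q _ (delVert (dupVertex G v) (some u))
          = q _ (dupVertex (delVert G u) ⟨v, hvu⟩) := by
        refine q_congr q hbase hrec (optTrimEquiv u) ?_
        rintro ⟨(_ | a), hx⟩ ⟨(_ | b), hy⟩
        · exact Iff.rfl
        · exact Iff.rfl
        · exact Iff.rfl
        · exact Iff.rfl
      have hIH := IH (n-1) hlt {w : V // w ≠ u} (delVert G u) ⟨v, hvu⟩ hcard
      -- Term 2: the pivoted graph is a pendant extension
      have hn0 : (none : Option V) ≠ some u := fun hh => Option.some_ne_none _ hh.symm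
      have hsv : (some v : Option V) ≠ some u := fun hh => huv' (Option.some_injective _ hh).symm
      have hvn : (⟨some v, hsv⟩ : {x : Option V // x ≠ some u}) ≠ ⟨none, hn0⟩ :=
        fun hh => Option.some_ne_none _ (congrArg Subtype.val hh)
      have hp : ∀ x, (delVert (elc (dupVertex G v) (some u) (some v)) (some u)).Adj ⟨none, hn0⟩ x
          ↔ x = ⟨some v, hsv⟩ := by
        rintro ⟨(_ | a), hx⟩
        · refine iff_of_false ?_ (fun hh => Option.some_ne_none _ (congrArg Subtype.val hh).symm)
          exact fun hA => (elc (dupVertex G v) (some u) (some v)).loopless.irrefl none hA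
        · rw [show ((delVert (elc (dupVertex G v) (some u) (some v)) (some u)).Adj
              ⟨none, hn0⟩ ⟨some a, hx⟩) ↔ ((elc (dupVertex G v) (some u) (some v)).Adj
              none (some a)) from Iff.rfl,
            dup_elc_none huv a (fun hh => hx (by rw [hh]))]
          constructor
          · intro hh; exact Subtype.ext (congrArg Option.some hh)
          · intro hh; exact Option.some_injective _ (congrArg Subtype.val hh)
      rw [q_pendant q hbase hrec
        (delVert (elc (dupVertex G v) (some u) (some v)) (some u))
        ⟨none, hn0⟩ ⟨some v, hsv⟩ hvn hp]
      -- transports for the two pendant pieces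
      have e2 : q _ (delVert (delVert (elc (dupVertex G v) (some u) (some v)) (some u)) ⟨none, hn0⟩)
          = q _ (delVert (elc G u v) u) := by
        refine q_congr q hbase hrec (optTrim2Equiv u hn0) ?_
        rintro ⟨⟨(_ | a), hx⟩, hx2⟩ ⟨⟨(_ | b), hy⟩, hy2⟩
        · exact absurd (Subtype.ext rfl) hx2
        · exact absurd (Subtype.ext rfl) hx2
        · exact absurd (Subtype.ext rfl) hy2
        · exact elc_dup_some G v u v a b
      have e3 : q _ (delVert (delVert (delVert (elc (dupVertex G v) (some u) (some v)) (some u))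
            ⟨none, hn0⟩) ⟨⟨some v, hsv⟩, hvn⟩)
          = q _ (delVert (delVert (elc G u v) u) ⟨v, hvu⟩) := by
        refine q_congr q hbase hrec (optTrim3Equiv u v hn0 hsv hvn hvu) ?_
        rintro ⟨⟨⟨(_ | a), hx⟩, hx2⟩, hx3⟩ ⟨⟨⟨(_ | b), hy⟩, hy2⟩, hy3⟩
        · exact absurd (Subtype.ext rfl) hx2
        · exact absurd (Subtype.ext rfl) hx2
        · exact absurd (Subtype.ext rfl) hy2
        · exact elc_dup_some G v u v a b
      rw [e1, hIH, e2, e3]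
      -- the recursion for G itself and the star identity
      have hrecG := hrec V G u v huv
      have hstar := q_star q hbase hrec G u v huv hvu huv'
      linear_combination hstar * Polynomial.X - hrecG * (1 + Polynomial.X)
    · have hv : ∀ x, ¬ G.Adj v x := fun x hx => hdeg ⟨x, hx.symm⟩
      have hnone : ∀ x, ¬ (dupVertex G v).Adj none x := by
        rintro (_ | a) h
        · exact h
        · exact hv a h
      rw [q_isolated q hbase hrec (Fintype.card (Option V)) _ _ none hnone rfl]
      have h2 : q _ (delVert (dupVertex G v) none) = q V G := by
        refine q_congr q hbase hrec optNoneEquiv ?_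
        rintro ⟨(_ | a), hx⟩ ⟨(_ | b), hy⟩
        · exact absurd rfl hx
        · exact absurd rfl hx
        · exact absurd rfl hy
        · exact Iff.rfl
      rw [h2, q_isolated q hbase hrec (Fintype.card V) _ _ v hv rfl]
      ring

end Final

/-- Duplicating a vertex `v` transforms the interlace polynomial by
`q(G') = (1+x)·q(G) − x·q(G\v)`. -/
theorem interlace_q_dupVertex
    (q : ∀ (W : Type) [Fintype W] [DecidableEq W], SimpleGraph W → Polynomial ℤ)
    (hbase : ∀ (W : Type) [Fintype W] [DecidableEq W],
      q W (⊥ : SimpleGraph W) = Polynomial.X ^ (Fintype.card W))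
    (hrec : ∀ (W : Type) [Fintype W] [DecidableEq W] (G : SimpleGraph W)
      (u v : W), G.Adj u v →
      q W G = q {w : W // w ≠ u} (delVert G u) + q {w : W // w ≠ u} (delVert (elc G u v) u))
    {V : Type} [Fintype V] [DecidableEq V] (G : SimpleGraph V) (v : V) :
    q (Option V) (dupVertex G v)
      = (1 + Polynomial.X) * q V G
        - Polynomial.X * q {w : V // w ≠ v} (delVert G v) :=
  main_aux q hbase hrec (Fintype.card V) V G v rfl
end

section
/- Non-unimodality is preserved under the vertex-duplication transformation of coefficient sequences: suppose q(G,x) = a(x) + c·x^j + x^{j+1}·b(x) with j = deg(a)+1, and q(G\v,x) = a(x) + x^j·b(x); then q(G',x) = (1+x)q(G,x) − x·q(G\v,x) has coefficient sequence equal to that of q(G) with the coefficient c repeated once, so q(G') is unimodal if and only if q(G) is unimodal. -/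
open Polynomial

/-- The coefficient sequence of a polynomial is unimodal: it is
non-decreasing up to some index `k`, and non-increasing from `k` on
(up to the degree). -/
def UnimodalCoeffs (p : Polynomial ℤ) : Prop :=
  ∃ k, (∀ i j : ℕ, i ≤ j → j ≤ k → p.coeff i ≤ p.coeff j) ∧
    (∀ i j : ℕ, k ≤ i → i ≤ j → j ≤ p.natDegree → p.coeff j ≤ p.coeff i)

/-- Non-unimodality is preserved by vertex duplication: if
`q(G) = a + c·x^j + x^{j+1}·b` with `j = deg(a)+1` and
`q(G\v) = a + x^j·b`, then `q(G') = (1+x)q(G) − x·q(G\v)` has the same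
coefficient sequence as `q(G)` but with the coefficient `c` repeated once,
and hence `q(G')` is unimodal if and only if `q(G)` is unimodal. -/
theorem dup_preserves_unimodality (a b : Polynomial ℤ) (c : ℤ) (j : ℕ)
    (hj : j = a.natDegree + 1)
    (qG qGdel qG' : Polynomial ℤ)
    (hqG : qG = a + C c * X ^ j + X ^ (j + 1) * b)
    (hqGdel : qGdel = a + X ^ j * b)
    (hqG' : qG' = (1 + X) * qG - X * qGdel) :
    (∀ i : ℕ, qG'.coeff i = if i ≤ j then qG.coeff i else qG.coeff (i - 1)) ∧
      (UnimodalCoeffs qG' ↔ UnimodalCoeffs qG) := by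
  have ha : ∀ i, j ≤ i → a.coeff i = 0 := fun i h =>
    coeff_eq_zero_of_natDegree_lt (by omega)
  have hq' : qG' = a + C c * X ^ j + C c * X ^ (j+1) + X ^ (j+2) * b := by
    rw [hqG', hqG, hqGdel]; ring
  have hbX : ∀ (n i : ℕ), (X ^ n * b).coeff i = if n ≤ i then b.coeff (i - n) else 0 := by
    intro n i; rw [mul_comm, coeff_mul_X_pow']
  have hcX : ∀ (n i : ℕ), (C c * X ^ n).coeff i = if i = n then c else 0 := by
    intro n i; simp [coeff_C_mul, coeff_X_pow, mul_ite]
  have hGc : ∀ i, qG.coeff i = a.coeff i + (if i = j then c else 0)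
      + (if j+1 ≤ i then b.coeff (i - (j+1)) else 0) := by
    intro i; rw [hqG, coeff_add, coeff_add, hcX, hbX]
  have hG'c : ∀ i, qG'.coeff i = a.coeff i + (if i = j then c else 0)
      + (if i = j+1 then c else 0) + (if j+2 ≤ i then b.coeff (i - (j+2)) else 0) := by
    intro i; rw [hq', coeff_add, coeff_add, coeff_add, hcX, hcX, hbX]
  have hcoeff : ∀ i : ℕ, qG'.coeff i = if i ≤ j then qG.coeff i else qG.coeff (i - 1) := by
    intro i
    by_cases hij : i ≤ j
    · rw [if_pos hij, hG'c, hGc]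
      split_ifs <;> first | (exfalso; omega) | ring
    · rw [if_neg hij, hG'c, hGc, ha i (by omega), ha (i-1) (by omega)]
      have he : i - (j+2) = i - 1 - (j+1) := by omega
      rw [he]
      split_ifs <;> first | (exfalso; omega) | ring
  refine ⟨hcoeff, ?_⟩
  have h1 : ∀ m, m ≤ j → qG'.coeff m = qG.coeff m := by
    intro m hm; rw [hcoeff, if_pos hm]
  have h2 : ∀ m, j ≤ m → qG'.coeff (m+1) = qG.coeff m := by
    intro m hm; rw [hcoeff, if_neg (by omega)]; congr 1
  by_cases hcb : c = 0 ∧ b = 0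
  · obtain ⟨rfl, rfl⟩ := hcb
    have hq'' : qG' = qG := by rw [hq', hqG]; simp
    rw [hq'']
  · -- main case: j ≤ natDegree qG
    have hdj : ∃ n, j ≤ n ∧ qG.coeff n ≠ 0 := by
      by_cases hc : c = 0
      · have hb : b ≠ 0 := fun hb => hcb ⟨hc, hb⟩
        refine ⟨j + 1 + b.natDegree, by omega, ?_⟩
        rw [hGc, ha _ (by omega), if_neg (by omega), if_pos (by omega)]
        have : j + 1 + b.natDegree - (j+1) = b.natDegree := by omega
        rw [this]
        simpa using mt leadingCoeff_eq_zero.mp hb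
      · refine ⟨j, le_refl j, ?_⟩
        rw [hGc, ha _ (le_refl j), if_pos rfl, if_neg (by omega)]
        simpa using hc
    obtain ⟨n, hjn, hn⟩ := hdj
    have hqne : qG ≠ 0 := fun h => hn (by simp [h])
    have hjd : j ≤ qG.natDegree := le_trans hjn (le_natDegree_of_ne_zero hn)
    have hub : qG'.natDegree ≤ qG.natDegree + 1 := by
      rw [natDegree_le_iff_coeff_eq_zero]
      intro m hm
      rw [hcoeff]
      split_ifs
      · exact coeff_eq_zero_of_natDegree_lt (by omega)
      · exact coeff_eq_zero_of_natDegree_lt (by omega)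
    have hd' : qG'.natDegree = qG.natDegree + 1 := by
      refine le_antisymm hub (le_natDegree_of_ne_zero ?_)
      rw [h2 _ hjd]
      exact mt leadingCoeff_eq_zero.mp hqne
    constructor
    · rintro ⟨k, hk1, hk2⟩
      by_cases hkj : k ≤ j
      · refine ⟨k, fun i m him hmk => ?_, fun i m hki him hmd => ?_⟩
        · rw [← h1 i (by omega), ← h1 m (by omega)]
          exact hk1 i m him hmk
        · by_cases hij : i ≤ j
          · by_cases hmj : m ≤ j
            · rw [← h1 i hij, ← h1 m hmj]
              exact hk2 i m hki him (by omega)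
            · rw [← h1 i hij, ← h2 m (by omega)]
              exact hk2 i (m+1) hki (by omega) (by omega)
          · rw [← h2 i (by omega), ← h2 m (by omega)]
            exact hk2 (i+1) (m+1) (by omega) (by omega) (by omega)
      · refine ⟨k - 1, fun i m him hmk => ?_, fun i m hki him hmd => ?_⟩
        · by_cases hij : i ≤ j
          · by_cases hmj : m ≤ j
            · rw [← h1 i hij, ← h1 m hmj]
              exact hk1 i m him (by omega)
            · rw [← h1 i hij, ← h2 m (by omega)]
              exact hk1 i (m+1) (by omega) (by omega)
          · rw [← h2 i (by omega), ← h2 m (by omega)]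
            exact hk1 (i+1) (m+1) (by omega) (by omega)
        · rw [← h2 i (by omega), ← h2 m (by omega)]
          exact hk2 (i+1) (m+1) (by omega) (by omega) (by omega)
    · rintro ⟨k, hk1, hk2⟩
      by_cases hkj : k ≤ j
      · refine ⟨k, fun i m him hmk => ?_, fun i m hki him hmd => ?_⟩
        · rw [h1 i (by omega), h1 m (by omega)]
          exact hk1 i m him hmk
        · by_cases hij : i ≤ j
          · by_cases hmj : m ≤ j
            · rw [h1 i hij, h1 m hmj]
              exact hk2 i m hki him (by omega)
            · obtain ⟨m', rfl⟩ : ∃ m', m = m' + 1 := ⟨m - 1, by omega⟩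
              rw [h1 i hij, h2 m' (by omega)]
              exact hk2 i m' hki (by omega) (by omega)
          · obtain ⟨i', rfl⟩ : ∃ i', i = i' + 1 := ⟨i - 1, by omega⟩
            obtain ⟨m', rfl⟩ : ∃ m', m = m' + 1 := ⟨m - 1, by omega⟩
            rw [h2 i' (by omega), h2 m' (by omega)]
            exact hk2 i' m' (by omega) (by omega) (by omega)
      · refine ⟨k + 1, fun i m him hmk => ?_, fun i m hki him hmd => ?_⟩
        · by_cases hij : i ≤ j
          · by_cases hmj : m ≤ j
            · rw [h1 i hij, h1 m hmj]
              exact hk1 i m him (by omega)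
            · obtain ⟨m', rfl⟩ : ∃ m', m = m' + 1 := ⟨m - 1, by omega⟩
              rw [h1 i hij, h2 m' (by omega)]
              exact hk1 i m' (by omega) (by omega)
          · obtain ⟨i', rfl⟩ : ∃ i', i = i' + 1 := ⟨i - 1, by omega⟩
            obtain ⟨m', rfl⟩ : ∃ m', m = m' + 1 := ⟨m - 1, by omega⟩
            rw [h2 i' (by omega), h2 m' (by omega)]
            exact hk1 i' m' (by omega) (by omega)
        · obtain ⟨i', rfl⟩ : ∃ i', i = i' + 1 := ⟨i - 1, by omega⟩
          obtain ⟨m', rfl⟩ : ∃ m', m = m' + 1 := ⟨m - 1, by omega⟩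
          rw [h2 i' (by omega), h2 m' (by omega)]
          exact hk2 i' m' (by omega) (by omega) (by omega)
end
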